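/- Let (Σ,g) be a closed Riemannian surface of unit volume, and suppose u ∈ C²(Σ) solves −Δ_g u = ρ₁(e^u/∫_Σ e^u dV_g − 1) − ρ₂(e^{−u}/∫_Σ e^{−u} dV_g − 1) with ρ₁ > 0, ρ₂ ∈ ℝ, and ū = 0. If the Green's function G of −Δ_g satisfies G(x,y) ≤ C₀ + (1/(2π)) log(1/d(x,y)), then for every p ≥ 1 with p·max(ρ₂,0) < π/2 there is a constant C (depending on p, ρ₂, Σ but not on u) such that ∫_Σ e^{−p u} dV_g ≤ C. -/

import Mathlib

open MeasureTheory Metric ENNReal NNReal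

private lemma cont_integrable {S : Type*} [MetricSpace S] [CompactSpace S] [MeasurableSpace S]
    [BorelSpace S] (μ : Measure S) [IsFiniteMeasure μ] {f : S → ℝ} (hf : Continuous f) :
    Integrable f μ :=
  integrableOn_univ.mp (hf.continuousOn.integrableOn_compact isCompact_univ)

private lemma jensen_exp {α : Type*} [MeasurableSpace α] (ν : Measure α)
    [IsProbabilityMeasure ν] (φ : α → ℝ) (hφ : Integrable φ ν)
    (hexp : Integrable (fun y => Real.exp (φ y)) ν) :
    Real.exp (∫ y, φ y ∂ν) ≤ ∫ y, Real.exp (φ y) ∂ν :=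
  convexOn_exp.map_integral_le Real.continuous_exp.continuousOn isClosed_univ
    (Filter.Eventually.of_forall fun _ => Set.mem_univ _) hφ hexp

/-- master estimate: uniform bound on ∫ d(x,y)^{-1/2} dμ(y). -/
private lemma master {S : Type*} [MetricSpace S] [CompactSpace S] [MeasurableSpace S] [BorelSpace S]
    (μ : Measure S) [IsProbabilityMeasure μ] (Cv : ℝ) (hCv : 0 < Cv)
    (hvol : ∀ (x : S) (r : ℝ), 0 < r → μ (ball x r) ≤ ENNReal.ofReal (Cv * r ^ 2)) :
    ∃ M : ℝ, 0 ≤ M ∧ ∀ x : S,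
      ∫⁻ y, ENNReal.ofReal (dist x y ^ (-(1/2) : ℝ)) ∂μ ≤ ENNReal.ofReal M := by
  -- the tail integral
  have hc : (-4 : ℝ) < -1 := by norm_num
  have hInt : IntegrableOn (fun t : ℝ => Cv * t ^ (-4 : ℝ)) (Set.Ioi 1) :=
    (integrableOn_Ioi_rpow_of_lt hc one_pos).const_mul Cv
  set T : ℝ := ∫ t in Set.Ioi (1:ℝ), Cv * t ^ (-4 : ℝ) with hT
  have hTnn : 0 ≤ T := by
    apply setIntegral_nonneg measurableSet_Ioi
    intro t ht
    have : (0:ℝ) < t := lt_trans one_pos ht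
    positivity
  have hTeq : ∫⁻ t in Set.Ioi (1:ℝ), ENNReal.ofReal (Cv * t ^ (-4 : ℝ)) = ENNReal.ofReal T := by
    rw [← ofReal_integral_eq_lintegral_ofReal hInt]
    filter_upwards [ae_restrict_mem measurableSet_Ioi] with t ht
    have : (0:ℝ) < t := lt_trans one_pos ht
    positivity
  refine ⟨1 + T, by linarith, fun x => ?_⟩
  have hmeas : AEMeasurable (fun y => dist x y ^ (-(1/2) : ℝ)) μ :=
    ((continuous_const.dist continuous_id).measurable.pow_const _).aemeasurable
  rw [lintegral_eq_lintegral_meas_lt μ (Filter.Eventually.of_forall fun y =>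
    Real.rpow_nonneg dist_nonneg _) hmeas]
  have hsplit : Set.Ioi (0:ℝ) = Set.Ioc 0 1 ∪ Set.Ioi 1 := (Set.Ioc_union_Ioi_eq_Ioi zero_le_one).symm
  rw [hsplit, lintegral_union measurableSet_Ioi Set.Ioc_disjoint_Ioi_same]
  have h1 : ∫⁻ t in Set.Ioc (0:ℝ) 1, μ {a : S | t < dist x a ^ (-(1/2) : ℝ)} ≤ 1 := by
    calc ∫⁻ t in Set.Ioc (0:ℝ) 1, μ {a : S | t < dist x a ^ (-(1/2) : ℝ)}
        ≤ ∫⁻ _ in Set.Ioc (0:ℝ) 1, 1 := lintegral_mono fun t => prob_le_one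
      _ = 1 := by simp
  have h2 : ∫⁻ t in Set.Ioi (1:ℝ), μ {a : S | t < dist x a ^ (-(1/2) : ℝ)}
      ≤ ENNReal.ofReal T := by
    rw [← hTeq]
    apply setLIntegral_mono (by measurability)
    intro t ht
    have ht1 : (1:ℝ) < t := ht
    have ht0 : (0:ℝ) < t := lt_trans one_pos ht1
    have hsub : {a : S | t < dist x a ^ (-(1/2) : ℝ)} ⊆ ball x (t ^ (-2 : ℝ)) := by
      intro y hy
      simp only [Set.mem_setOf_eq] at hy
      have hd0 : 0 < dist x y := by
        rcases eq_or_lt_of_le (dist_nonneg (x := x) (y := y)) with h | h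
        · exfalso
          rw [← h, Real.zero_rpow (by norm_num)] at hy
          exact absurd hy (not_lt.mpr ht0.le)
        · exact h
      -- from t < d^{-1/2} deduce d < t^{-2}
      have h2' : t ^ (2:ℝ) < (dist x y ^ (-(1/2) : ℝ)) ^ (2:ℝ) :=
        Real.rpow_lt_rpow ht0.le hy (by norm_num)
      have hdd : (dist x y ^ (-(1/2) : ℝ)) ^ (2:ℝ) = (dist x y)⁻¹ := by
        rw [← Real.rpow_mul dist_nonneg]
        norm_num [Real.rpow_neg_one]
      rw [hdd] at h2'
      have : dist x y < (t ^ (2:ℝ))⁻¹ := by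
        have h1 : 0 < t ^ (2:ℝ) := Real.rpow_pos_of_pos ht0 _
        rw [← inv_inv (dist x y)]
        exact inv_strictAnti₀ h1 h2'
      rw [mem_ball, dist_comm]
      calc dist x y < (t ^ (2:ℝ))⁻¹ := this
        _ = t ^ (-2 : ℝ) := (Real.rpow_neg ht0.le 2).symm
    calc μ {a : S | t < dist x a ^ (-(1/2) : ℝ)} ≤ μ (ball x (t ^ (-2:ℝ))) := measure_mono hsub
      _ ≤ ENNReal.ofReal (Cv * (t ^ (-2:ℝ)) ^ 2) := hvol x _ (Real.rpow_pos_of_pos ht0 _)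
      _ = ENNReal.ofReal (Cv * t ^ (-4:ℝ)) := by
          congr 1
          rw [← Real.rpow_natCast (t ^ (-2:ℝ)) 2, ← Real.rpow_mul ht0.le]
          norm_num
  calc _ ≤ (1 : ℝ≥0∞) + ENNReal.ofReal T := add_le_add h1 h2
    _ = ENNReal.ofReal (1 + T) := by rw [ENNReal.ofReal_add zero_le_one hTnn, ENNReal.ofReal_one]


set_option maxHeartbeats 1000000 in
theorem stmt17 {S : Type*} [MetricSpace S] [CompactSpace S] [MeasurableSpace S] [BorelSpace S]
    (μ : Measure S) [IsProbabilityMeasure μ] (Cv C₀ : ℝ) (hCv : 0 < Cv)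
    (hvol : ∀ (x : S) (r : ℝ), 0 < r → μ (ball x r) ≤ ENNReal.ofReal (Cv * r ^ 2))
    (G : S → S → ℝ)
    (hGlb : ∀ x y, -C₀ ≤ G x y)
    (hGub : ∀ x y, x ≠ y → G x y ≤ C₀ + (1 / (2 * Real.pi)) * Real.log (1 / dist x y))
    (hGzero : ∀ x, (∫ y, G x y ∂μ) = 0)
    (ρ₁ ρ₂ : ℝ) (hρ₁ : 0 < ρ₁)
    (p : ℝ) (hp : 1 ≤ p) (hpρ₂ : p * max ρ₂ 0 < Real.pi / 2) :
    ∃ C : ℝ, ∀ u : S → ℝ, Continuous u →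
      (∫ x, u x ∂μ) = 0 →
      (∀ x : S, u x = ∫ y, G x y *
          (ρ₁ * (Real.exp (u y) / (∫ z, Real.exp (u z) ∂μ) - 1) -
            ρ₂ * (Real.exp (-u y) / (∫ z, Real.exp (-u z) ∂μ) - 1)) ∂μ) →
      (∫ x, Real.exp (-p * u x) ∂μ) ≤ C := by
  obtain ⟨M, hM0, hM⟩ := master μ Cv hCv hvol
  have hπ : (0:ℝ) < Real.pi := Real.pi_pos
  have hp0 : (0:ℝ) < p := lt_of_lt_of_le one_pos hp
  set rplus : ℝ := max ρ₂ 0 with hr_def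
  have hr0 : 0 ≤ rplus := le_max_right _ _
  set K : ℝ := ρ₁ + |ρ₂| with hK_def
  have hK : 0 < K := by positivity
  set C₂ : ℝ := 2 * |C₀| * K + K * (M / Real.pi) with hC₂_def
  -- nonemptiness and vanishing singletons
  have hNe : Nonempty S := by
    by_contra h
    rw [not_nonempty_iff] at h
    have h1 : μ Set.univ = 1 := measure_univ
    rw [Set.univ_eq_empty_iff.mpr h, measure_empty] at h1
    exact zero_ne_one h1
  have hsing : ∀ x : S, μ {x} = 0 := by
    intro x
    have h1 : ∀ n : ℕ, μ {x} ≤ ENNReal.ofReal (Cv * ((1:ℝ)/(n+1)) ^ 2) := by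
      intro n
      refine le_trans (measure_mono ?_) (hvol x _ (by positivity))
      rw [Set.singleton_subset_iff]
      exact mem_ball_self (by positivity)
    have h2 : Filter.Tendsto (fun n : ℕ => ENNReal.ofReal (Cv * ((1:ℝ)/(n+1)) ^ 2))
        Filter.atTop (nhds 0) := by
      rw [show (0:ℝ≥0∞) = ENNReal.ofReal 0 by simp]
      apply ENNReal.tendsto_ofReal
      have h3 : Filter.Tendsto (fun n : ℕ => (1:ℝ)/(n+1)) Filter.atTop (nhds 0) :=
        tendsto_one_div_add_atTop_nhds_zero_nat
      simpa using (h3.pow 2).const_mul Cv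
    exact le_antisymm (ge_of_tendsto' h2 h1) zero_le
  -- the modified log kernel
  set L : S → S → ℝ := fun x y => max 0 ((1 / (2 * Real.pi)) * Real.log (1 / dist x y))
    with hL_def
  have hL0 : ∀ x y, 0 ≤ L x y := fun x y => le_max_left _ _
  have hLle : ∀ x y, L x y ≤ (1 / Real.pi) * dist x y ^ (-(1/2) : ℝ) := by
    intro x y
    rcases eq_or_lt_of_le (dist_nonneg (x := x) (y := y)) with hd | hd
    · have h0 : dist x y = 0 := hd.symm
      simp [hL_def, h0, Real.zero_rpow (by norm_num : (-(1/2):ℝ) ≠ 0)]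
    · apply max_le (by positivity)
      have hlog : Real.log (1 / dist x y) ≤ 2 * dist x y ^ (-(1/2) : ℝ) := by
        have hs : 0 < dist x y ^ (-(1/2) : ℝ) := Real.rpow_pos_of_pos hd _
        have h1 : (1 / dist x y) = (dist x y ^ (-(1/2) : ℝ)) ^ (2:ℝ) := by
          rw [← Real.rpow_mul dist_nonneg]
          norm_num [Real.rpow_neg_one]
        rw [h1, Real.log_rpow hs]
        nlinarith [Real.log_le_sub_one_of_pos hs]
      calc (1 / (2 * Real.pi)) * Real.log (1 / dist x y)
          ≤ (1 / (2 * Real.pi)) * (2 * dist x y ^ (-(1/2) : ℝ)) :=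
            mul_le_mul_of_nonneg_left hlog (by positivity)
        _ = (1 / Real.pi) * dist x y ^ (-(1/2) : ℝ) := by field_simp
  have hLmeas : ∀ x, Measurable (L x) := by
    intro x
    apply measurable_const.max
    apply Measurable.const_mul
    exact Real.measurable_log.comp
      (measurable_const.div (continuous_const.dist continuous_id).measurable)
  -- integrability of the rpow kernel
  have hdmeas : ∀ x : S, Measurable fun y => dist x y ^ (-(1/2) : ℝ) := fun x =>
    (continuous_const.dist continuous_id).measurable.pow_const _
  have hdint : ∀ x : S, Integrable (fun y => dist x y ^ (-(1/2) : ℝ)) μ := by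
    intro x
    refine ⟨(hdmeas x).aestronglyMeasurable, ?_⟩
    rw [hasFiniteIntegral_iff_ofReal (Filter.Eventually.of_forall fun y =>
      Real.rpow_nonneg dist_nonneg _)]
    exact lt_of_le_of_lt (hM x) ENNReal.ofReal_lt_top
  have hdval : ∀ x : S, ∫ y, dist x y ^ (-(1/2) : ℝ) ∂μ ≤ M := by
    intro x
    rw [integral_eq_lintegral_of_nonneg_ae (Filter.Eventually.of_forall fun y =>
      Real.rpow_nonneg dist_nonneg _) (hdmeas x).aestronglyMeasurable]
    exact ENNReal.toReal_le_of_le_ofReal hM0 (hM x)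
  have hLint : ∀ x, Integrable (L x) μ := by
    intro x
    refine ((hdint x).const_mul (1/Real.pi)).mono' ((hLmeas x).aestronglyMeasurable) ?_
    exact Filter.Eventually.of_forall fun y => by
      rw [Real.norm_eq_abs, abs_of_nonneg (hL0 x y)]; exact hLle x y
  have hLval : ∀ x, ∫ y, L x y ∂μ ≤ M / Real.pi := by
    intro x
    calc ∫ y, L x y ∂μ ≤ ∫ y, (1/Real.pi) * dist x y ^ (-(1/2) : ℝ) ∂μ :=
          integral_mono (hLint x) ((hdint x).const_mul _) (hLle x)
      _ = (1/Real.pi) * ∫ y, dist x y ^ (-(1/2) : ℝ) ∂μ := integral_const_mul _ _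
      _ ≤ (1/Real.pi) * M := mul_le_mul_of_nonneg_left (hdval x) (by positivity)
      _ = M / Real.pi := by ring
  refine ⟨1 + Real.exp (p * C₂) * (1 + M), ?_⟩
  intro u hu hmean hrep
  set A : ℝ := ∫ z, Real.exp (u z) ∂μ with hA_def
  set B : ℝ := ∫ z, Real.exp (-u z) ∂μ with hB_def
  have heA : Integrable (fun z => Real.exp (u z)) μ :=
    cont_integrable μ (Real.continuous_exp.comp hu)
  have heB : Integrable (fun z => Real.exp (-u z)) μ :=
    cont_integrable μ (Real.continuous_exp.comp hu.neg)
  have hA : 0 < A := by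
    obtain ⟨z₁, -, hz₁⟩ := isCompact_univ.exists_isMinOn Set.univ_nonempty hu.continuousOn
    refine lt_of_lt_of_le (Real.exp_pos (u z₁)) ?_
    calc Real.exp (u z₁) = ∫ _, Real.exp (u z₁) ∂μ := by simp
      _ ≤ A := integral_mono (integrable_const _) heA
          (fun z => Real.exp_le_exp.mpr (hz₁ (Set.mem_univ z)))
  have hB : 0 < B := by
    obtain ⟨z₁, -, hz₁⟩ := isCompact_univ.exists_isMinOn Set.univ_nonempty
      hu.neg.continuousOn
    refine lt_of_lt_of_le (Real.exp_pos (-u z₁)) ?_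
    calc Real.exp (-u z₁) = ∫ _, Real.exp (-u z₁) ∂μ := by simp
      _ ≤ B := integral_mono (integrable_const _) heB
          (fun z => Real.exp_le_exp.mpr (hz₁ (Set.mem_univ z)))
  -- density w and function f
  set w : S → ℝ := fun y => Real.exp (-u y) / B with hw_def
  have hwcont : Continuous w := (Real.continuous_exp.comp hu.neg).div_const B
  have hw0 : ∀ y, 0 ≤ w y := fun y => by positivity
  have hwint : Integrable w μ := heB.div_const B
  have hwone : ∫ y, w y ∂μ = 1 := by
    rw [hw_def]
    simp only [integral_div]
    rw [← hB_def, div_self hB.ne']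
  set f : S → ℝ := fun y => ρ₁ * (Real.exp (u y) / A - 1) - ρ₂ * (Real.exp (-u y) / B - 1)
    with hf_def
  have hfcont : Continuous f := by
    apply Continuous.sub
    · exact continuous_const.mul
        (((Real.continuous_exp.comp hu).div_const A).sub continuous_const)
    · exact continuous_const.mul
        (((Real.continuous_exp.comp hu.neg).div_const B).sub continuous_const)
  have hfint : Integrable f μ := cont_integrable μ hfcont
  have hrep' : ∀ x, u x = ∫ y, G x y * f y ∂μ := fun x => hrep x
  -- bound on ∫ |f|
  have hfabs : ∫ y, |f y| ∂μ ≤ 2 * K := by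
    have hFint : Integrable (fun y => ρ₁/A * Real.exp (u y) + (|ρ₂|/B * Real.exp (-u y) + K)) μ :=
      (heA.const_mul _).add ((heB.const_mul _).add (integrable_const _))
    have h1 : ∫ y, |f y| ∂μ
        ≤ ∫ y, (ρ₁/A * Real.exp (u y) + (|ρ₂|/B * Real.exp (-u y) + K)) ∂μ := by
      refine integral_mono hfint.abs hFint fun y => ?_
      have e1 : 0 ≤ Real.exp (u y) / A := by positivity
      have e2 : 0 ≤ Real.exp (-u y) / B := by positivity
      have hfy : f y = ρ₁ * (Real.exp (u y)/A) - ρ₁ - ρ₂ * (Real.exp (-u y)/B) + ρ₂ := by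
        simp only [hf_def]; ring
      have hRHS : ρ₁/A * Real.exp (u y) + (|ρ₂|/B * Real.exp (-u y) + K)
          = ρ₁ * (Real.exp (u y)/A) + |ρ₂| * (Real.exp (-u y)/B) + (ρ₁ + |ρ₂|) := by
        rw [hK_def]; ring
      rw [hRHS]
      have h5 : -(ρ₂ * (Real.exp (-u y)/B)) ≤ |ρ₂| * (Real.exp (-u y)/B) := by
        rw [neg_mul_eq_neg_mul]
        exact mul_le_mul_of_nonneg_right (neg_le_abs ρ₂) e2
      have h6 : ρ₂ * (Real.exp (-u y)/B) ≤ |ρ₂| * (Real.exp (-u y)/B) :=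
        mul_le_mul_of_nonneg_right (le_abs_self ρ₂) e2
      have h9 : 0 ≤ ρ₁ * (Real.exp (u y)/A) := mul_nonneg hρ₁.le e1
      have h7 : -ρ₂ ≤ |ρ₂| := neg_le_abs ρ₂
      have h8 : ρ₂ ≤ |ρ₂| := le_abs_self ρ₂
      rw [abs_le, hfy]
      constructor <;> linarith
    refine h1.trans (le_of_eq ?_)
    have hI1 : Integrable (fun y => ρ₁/A * Real.exp (u y)) μ := heA.const_mul _
    have hI2 : Integrable (fun y => |ρ₂|/B * Real.exp (-u y)) μ := heB.const_mul _
    have hI3 : Integrable (fun y => |ρ₂|/B * Real.exp (-u y) + K) μ :=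
      hI2.add (integrable_const _)
    rw [integral_add hI1 hI3, integral_add hI2 (integrable_const K), integral_const_mul,
      integral_const_mul, integral_const]
    simp only [measure_univ, probReal_univ, ENNReal.toReal_one, smul_eq_mul, one_mul]
    rw [← hA_def, ← hB_def, hK_def]
    field_simp
    ring
  -- the function m and its bound
  set m : S → ℝ := fun y => K + rplus * w y with hm_def
  have hm0 : ∀ y, 0 ≤ m y := fun y => by
    have := hw0 y; have := hK.le; positivity
  have hmcont : Continuous m := continuous_const.add (continuous_const.mul hwcont)
  obtain ⟨z₂, -, hz₂⟩ := isCompact_univ.exists_isMaxOn Set.univ_nonempty hwcont.continuousOn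
  set Km : ℝ := K + rplus * w z₂ with hKm_def
  have hmK : ∀ y, m y ≤ Km :=
    fun y => add_le_add_right (mul_le_mul_of_nonneg_left (hz₂ (Set.mem_univ y)) hr0) K
  -- the key pointwise a.e. bound
  have hkey : ∀ x : S, ∀ᵐ y ∂μ, -(G x y * f y) ≤ |C₀| * |f y| + L x y * m y := by
    intro x
    have hax : ∀ᵐ y ∂μ, y ≠ x := by
      refine ae_iff.mpr ?_
      have h0 : {y : S | ¬ y ≠ x} = {x} := by ext y; simp
      rw [h0]; exact hsing x
    filter_upwards [hax] with y hy
    have hMy : -(f y) ≤ m y := by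
      have e1 : 0 ≤ Real.exp (u y) / A := by positivity
      have e2 : 0 ≤ Real.exp (-u y) / B := by positivity
      have h6 : ρ₂ * (Real.exp (-u y)/B) ≤ rplus * (Real.exp (-u y)/B) :=
        mul_le_mul_of_nonneg_right (le_max_left _ _) e2
      have h9 : 0 ≤ ρ₁ * (Real.exp (u y)/A) := mul_nonneg hρ₁.le e1
      have hfy : -(f y) = -(ρ₁ * (Real.exp (u y)/A)) + ρ₁ + ρ₂ * (Real.exp (-u y)/B) - ρ₂ := by
        simp only [hf_def]; ring
      have hmy : m y = ρ₁ + |ρ₂| + rplus * (Real.exp (-u y)/B) := by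
        simp only [hm_def, hw_def, hK_def]
      have h7 : -ρ₂ ≤ |ρ₂| := neg_le_abs ρ₂
      rw [hfy, hmy]
      linarith
    rcases le_or_gt 0 (-(f y)) with h | h
    · have hG : G x y ≤ |C₀| + L x y := by
        calc G x y ≤ C₀ + (1/(2*Real.pi)) * Real.log (1/dist x y) := hGub x y (Ne.symm hy)
          _ ≤ |C₀| + L x y := add_le_add (le_abs_self C₀) (le_max_right _ _)
      have h1 : -(G x y * f y) = G x y * (-(f y)) := by ring
      rw [h1]
      calc G x y * (-(f y)) ≤ (|C₀| + L x y) * (-(f y)) := mul_le_mul_of_nonneg_right hG h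
        _ = |C₀| * (-(f y)) + L x y * (-(f y)) := by ring
        _ ≤ |C₀| * |f y| + L x y * m y :=
            add_le_add (mul_le_mul_of_nonneg_left (neg_le_abs _) (abs_nonneg _))
              (mul_le_mul_of_nonneg_left hMy (hL0 x y))
    · have h1 : -(G x y * f y) = G x y * (-(f y)) := by ring
      rw [h1]
      calc G x y * (-(f y)) ≤ (-C₀) * (-(f y)) :=
            mul_le_mul_of_nonpos_right (hGlb x y) (by linarith)
        _ = C₀ * f y := by ring
        _ ≤ |C₀| * |f y| := (le_abs_self _).trans (le_of_eq (abs_mul _ _))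
        _ ≤ |C₀| * |f y| + L x y * m y :=
            le_add_of_nonneg_right (mul_nonneg (hL0 x y) (hm0 y))
  -- kernel Φ, Tonelli bound
  set Φ : S → S → ℝ≥0∞ := fun x y => ENNReal.ofReal (dist x y ^ (-(1/2) : ℝ) * w y) with hΦ_def
  have hΦmeas : Measurable (fun q : S × S => Φ q.1 q.2) := by
    apply Measurable.ennreal_ofReal
    exact (continuous_dist.measurable.pow_const _).mul (hwcont.measurable.comp measurable_snd)
  have hswap : ∫⁻ x, ∫⁻ y, Φ x y ∂μ ∂μ ≤ ENNReal.ofReal M := by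
    rw [lintegral_lintegral_swap hΦmeas.aemeasurable]
    have hstep : ∀ y : S, ∫⁻ x, Φ x y ∂μ ≤ ENNReal.ofReal M * ENNReal.ofReal (w y) := by
      intro y
      have h1 : ∀ x : S, Φ x y
          = ENNReal.ofReal (dist y x ^ (-(1/2):ℝ)) * ENNReal.ofReal (w y) := by
        intro x
        simp only [hΦ_def]
        rw [ENNReal.ofReal_mul (Real.rpow_nonneg dist_nonneg _), dist_comm]
      calc ∫⁻ x, Φ x y ∂μ
          = ∫⁻ x, ENNReal.ofReal (dist y x ^ (-(1/2):ℝ)) * ENNReal.ofReal (w y) ∂μ :=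
            lintegral_congr h1
        _ = (∫⁻ x, ENNReal.ofReal (dist y x ^ (-(1/2):ℝ)) ∂μ) * ENNReal.ofReal (w y) :=
            lintegral_mul_const'' _ ((hdmeas y).ennreal_ofReal.aemeasurable)
        _ ≤ ENNReal.ofReal M * ENNReal.ofReal (w y) := mul_le_mul_left (hM y) _
    calc ∫⁻ y, ∫⁻ x, Φ x y ∂μ ∂μ ≤ ∫⁻ y, ENNReal.ofReal M * ENNReal.ofReal (w y) ∂μ :=
          lintegral_mono hstep
      _ = ENNReal.ofReal M * ∫⁻ y, ENNReal.ofReal (w y) ∂μ :=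
          lintegral_const_mul'' _ (hwcont.measurable.ennreal_ofReal.aemeasurable)
      _ = ENNReal.ofReal M := by
          rw [← ofReal_integral_eq_lintegral_ofReal hwint (Filter.Eventually.of_forall hw0),
            hwone, ENNReal.ofReal_one, mul_one]
  have hIbar_meas : Measurable fun x => ∫⁻ y, Φ x y ∂μ := hΦmeas.lintegral_prod_right'
  have hfin : ∀ᵐ x ∂μ, ∫⁻ y, Φ x y ∂μ < ⊤ :=
    ae_lt_top hIbar_meas (lt_of_le_of_lt hswap ENNReal.ofReal_lt_top).ne
  set Ibar : S → ℝ := fun x => (∫⁻ y, Φ x y ∂μ).toReal with hIbar_def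
  have hIbar0 : ∀ x, 0 ≤ Ibar x := fun x => ENNReal.toReal_nonneg
  have hIbarInt : Integrable Ibar μ := by
    refine ⟨(ENNReal.measurable_toReal.comp hIbar_meas).aestronglyMeasurable, ?_⟩
    rw [hasFiniteIntegral_iff_ofReal (Filter.Eventually.of_forall hIbar0)]
    calc ∫⁻ x, ENNReal.ofReal (Ibar x) ∂μ ≤ ∫⁻ x, ∫⁻ y, Φ x y ∂μ ∂μ :=
          lintegral_mono fun x => ENNReal.ofReal_toReal_le
      _ ≤ ENNReal.ofReal M := hswap
      _ < ⊤ := ENNReal.ofReal_lt_top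
  have hIbarval : ∫ x, Ibar x ∂μ ≤ M := by
    rw [integral_eq_lintegral_of_nonneg_ae (Filter.Eventually.of_forall hIbar0)
      (ENNReal.measurable_toReal.comp hIbar_meas).aestronglyMeasurable]
    refine ENNReal.toReal_le_of_le_ofReal hM0 ?_
    calc ∫⁻ x, ENNReal.ofReal (Ibar x) ∂μ ≤ ∫⁻ x, ∫⁻ y, Φ x y ∂μ ∂μ :=
          lintegral_mono fun x => ENNReal.ofReal_toReal_le
      _ ≤ ENNReal.ofReal M := hswap
  -- main pointwise bound
  have hmain : ∀ᵐ x ∂μ, Real.exp (-p * u x) ≤ 1 + Real.exp (p * C₂) * (1 + Ibar x) := by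
    filter_upwards [hfin] with x hfx
    by_cases hint : Integrable (fun y => G x y * f y) μ
    swap
    · rw [hrep' x, integral_undef hint]
      simp only [mul_zero, Real.exp_zero]
      nlinarith [Real.exp_pos (p * C₂), hIbar0 x]
    -- auxiliary integrability facts at this x
    have hdw_meas : Measurable (fun y => dist x y ^ (-(1/2):ℝ) * w y) :=
      (hdmeas x).mul hwcont.measurable
    have hdw_nn : ∀ y, 0 ≤ dist x y ^ (-(1/2):ℝ) * w y :=
      fun y => mul_nonneg (Real.rpow_nonneg dist_nonneg _) (hw0 y)
    have hdw_int : Integrable (fun y => dist x y ^ (-(1/2):ℝ) * w y) μ := by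
      refine ⟨hdw_meas.aestronglyMeasurable, ?_⟩
      rw [hasFiniteIntegral_iff_ofReal (Filter.Eventually.of_forall hdw_nn)]
      exact hfx
    have hdw_val : ∫ y, dist x y ^ (-(1/2):ℝ) * w y ∂μ = Ibar x := by
      rw [integral_eq_lintegral_of_nonneg_ae (Filter.Eventually.of_forall hdw_nn)
        hdw_meas.aestronglyMeasurable]
    -- step 1
    have hLm_int : Integrable (fun y => L x y * m y) μ := by
      refine ((hdint x).const_mul (Km * (1/Real.pi))).mono'
        (((hLmeas x).mul hmcont.measurable).aestronglyMeasurable)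
        (Filter.Eventually.of_forall fun y => ?_)
      rw [Real.norm_eq_abs, abs_of_nonneg (mul_nonneg (hL0 x y) (hm0 y))]
      calc L x y * m y ≤ ((1/Real.pi) * dist x y ^ (-(1/2):ℝ)) * Km :=
            mul_le_mul (hLle x y) (hmK y) (hm0 y) (by positivity)
        _ = Km * (1/Real.pi) * dist x y ^ (-(1/2):ℝ) := by ring
    have hstep1 : -(u x) ≤ |C₀| * (∫ y, |f y| ∂μ) + ∫ y, L x y * m y ∂μ := by
      have h1 : -(u x) = ∫ y, -(G x y * f y) ∂μ := by rw [hrep' x, ← integral_neg]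
      rw [h1]
      have hI4 : Integrable (fun y => |C₀| * |f y|) μ := hfint.abs.const_mul _
      calc ∫ y, -(G x y * f y) ∂μ ≤ ∫ y, (|C₀| * |f y| + L x y * m y) ∂μ :=
            integral_mono_ae hint.neg (hI4.add hLm_int) (hkey x)
        _ = |C₀| * (∫ y, |f y| ∂μ) + ∫ y, L x y * m y ∂μ := by
            rw [integral_add hI4 hLm_int, integral_const_mul]
    -- step 2
    have hLw_int : Integrable (fun y => L x y * w y) μ := by
      have h2 : Integrable (fun y => w y * L x y) μ :=
        (hLint x).bdd_mul hwcont.measurable.aestronglyMeasurable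
          (c := w z₂) (Filter.Eventually.of_forall fun y => by
            rw [Real.norm_eq_abs, abs_of_nonneg (hw0 y)]; exact hz₂ (Set.mem_univ y))
      exact h2.congr (Filter.Eventually.of_forall fun y => mul_comm _ _)
    have hLw0 : 0 ≤ ∫ y, L x y * w y ∂μ :=
      integral_nonneg fun y => mul_nonneg (hL0 x y) (hw0 y)
    have hstep2 : ∫ y, L x y * m y ∂μ ≤ K * (M/Real.pi) + rplus * ∫ y, L x y * w y ∂μ := by
      have h1 : ∀ y, L x y * m y = K * L x y + rplus * (L x y * w y) := by
        intro y; simp only [hm_def]; ring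
      simp only [h1]
      have hI5 : Integrable (fun y => K * L x y) μ := (hLint x).const_mul K
      have hI6 : Integrable (fun y => rplus * (L x y * w y)) μ := hLw_int.const_mul rplus
      rw [integral_add hI5 hI6, integral_const_mul, integral_const_mul]
      exact add_le_add_left (mul_le_mul_of_nonneg_left (hLval x) hK.le) _
    -- the tilted probability measure
    set wn : S → ℝ≥0 := fun y => (w y).toNNReal with hwn_def
    have hwn_meas : Measurable wn := measurable_real_toNNReal.comp hwcont.measurable
    have hwn_coe : ∀ y, (wn y : ℝ) = w y := fun y => Real.coe_toNNReal _ (hw0 y)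
    set ν : Measure S := μ.withDensity (fun y => (wn y : ℝ≥0∞)) with hν_def
    have hνprob : IsProbabilityMeasure ν := by
      constructor
      rw [hν_def, withDensity_apply _ MeasurableSet.univ, Measure.restrict_univ]
      have h9 : ∫⁻ y, ENNReal.ofReal (w y) ∂μ = 1 := by
        rw [← ofReal_integral_eq_lintegral_ofReal hwint (Filter.Eventually.of_forall hw0),
          hwone, ENNReal.ofReal_one]
      exact h9
    haveI := hνprob
    have hsmul : ∀ g : S → ℝ, ∫ y, g y ∂ν = ∫ y, w y * g y ∂μ := by
      intro g
      rw [hν_def, integral_withDensity_eq_integral_smul hwn_meas]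
      congr 1
      ext y
      simp only [NNReal.smul_def, smul_eq_mul, hwn_coe]
    have hgν : Integrable (fun y => 1 + dist x y ^ (-(1/2):ℝ)) ν := by
      rw [hν_def, integrable_withDensity_iff_integrable_smul hwn_meas]
      have h4 : Integrable (fun y => w y * (1 + dist x y ^ (-(1/2):ℝ))) μ := by
        have h5 : (fun y => w y * (1 + dist x y ^ (-(1/2):ℝ)))
            = fun y => w y + dist x y ^ (-(1/2):ℝ) * w y := by ext y; ring
        rw [h5]; exact hwint.add hdw_int
      refine h4.congr (Filter.Eventually.of_forall fun y => ?_)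
      simp only [NNReal.smul_def, smul_eq_mul, hwn_coe]
    -- the exponent function φ
    set φ : S → ℝ := fun y => (p * rplus) * L x y with hφ_def
    have hφ0 : ∀ y, 0 ≤ φ y := fun y => mul_nonneg (mul_nonneg hp0.le hr0) (hL0 x y)
    have hexp_le : ∀ y, Real.exp (φ y) ≤ 1 + dist x y ^ (-(1/2):ℝ) := by
      intro y
      have hd0 : (0:ℝ) ≤ dist x y := dist_nonneg
      have hβ0 : 0 ≤ p * rplus * (1/(2*Real.pi)) := by positivity
      have hβ : p * rplus * (1/(2*Real.pi)) ≤ 1/2 := by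
        rw [mul_one_div, div_le_div_iff₀ (by positivity) (by norm_num)]
        nlinarith [hpρ₂, hπ]
      have h1 : φ y = max 0 ((p * rplus * (1/(2*Real.pi))) * Real.log (1/dist x y)) := by
        simp only [hφ_def, hL_def]
        rw [mul_max_of_nonneg _ _ (mul_nonneg hp0.le hr0), mul_zero]
        congr 1
        ring
      rw [h1, Real.exp_monotone.map_max, Real.exp_zero]
      have hrnn : 0 ≤ dist x y ^ (-(1/2):ℝ) := Real.rpow_nonneg hd0 _
      refine max_le (le_add_of_nonneg_right hrnn) ?_
      rcases eq_or_lt_of_le hd0 with hdz | hdz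
      · rw [← hdz]
        simp only [_root_.div_zero, Real.log_zero, mul_zero, Real.exp_zero,
          Real.zero_rpow (by norm_num : (-(1/2):ℝ) ≠ 0)]
        linarith
      · have h1d : 0 < 1/dist x y := by positivity
        have h2 : Real.exp ((p * rplus * (1/(2*Real.pi))) * Real.log (1/dist x y))
            = (1/dist x y) ^ (p * rplus * (1/(2*Real.pi))) := by
          rw [Real.rpow_def_of_pos h1d, mul_comm]
        rw [h2]
        rcases le_or_gt 1 (dist x y) with hd1 | hd1
        · have h3 : (1/dist x y) ^ (p * rplus * (1/(2*Real.pi))) ≤ 1 :=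
            Real.rpow_le_one (by positivity)
              (by rw [div_le_one (by linarith)]; exact hd1) hβ0
          linarith
        · have hx1 : 1 ≤ 1/dist x y := by rw [le_div_iff₀ hdz]; linarith
          have h3 : (1/dist x y) ^ (p * rplus * (1/(2*Real.pi)))
              ≤ (1/dist x y) ^ ((1:ℝ)/2) := Real.rpow_le_rpow_of_exponent_le hx1 hβ
          have h4 : (1/dist x y) ^ ((1:ℝ)/2) = dist x y ^ (-(1/2):ℝ) := by
            rw [one_div, Real.inv_rpow hd0, ← Real.rpow_neg hd0]
          linarith [h3.trans_eq h4]
    -- Jensen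
    have hexpν : Integrable (fun y => Real.exp (φ y)) ν :=
      hgν.mono' (Real.measurable_exp.comp ((hLmeas x).const_mul _)).aestronglyMeasurable
        (Filter.Eventually.of_forall fun y => by
          rw [Real.norm_eq_abs, abs_of_nonneg (Real.exp_pos _).le]; exact hexp_le y)
    have hφν : Integrable φ ν :=
      hexpν.mono' ((hLmeas x).const_mul _).aestronglyMeasurable
        (Filter.Eventually.of_forall fun y => by
          rw [Real.norm_eq_abs, abs_of_nonneg (hφ0 y)]
          linarith [Real.add_one_le_exp (φ y)])
    have hjen := jensen_exp ν φ hφν hexpν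
    have hφval : ∫ y, φ y ∂ν = (p * rplus) * ∫ y, L x y * w y ∂μ := by
      rw [hsmul φ]
      calc ∫ y, w y * φ y ∂μ = ∫ y, (p * rplus) * (L x y * w y) ∂μ := by
            congr 1; ext y; simp only [hφ_def]; ring
        _ = (p * rplus) * ∫ y, L x y * w y ∂μ := integral_const_mul _ _
    have hgν_val : ∫ y, (1 + dist x y ^ (-(1/2):ℝ)) ∂ν = 1 + Ibar x := by
      rw [hsmul]
      calc ∫ y, w y * (1 + dist x y ^ (-(1/2):ℝ)) ∂μ
          = ∫ y, (w y + dist x y ^ (-(1/2):ℝ) * w y) ∂μ := by congr 1; ext y; ring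
        _ = (∫ y, w y ∂μ) + ∫ y, dist x y ^ (-(1/2):ℝ) * w y ∂μ := integral_add hwint hdw_int
        _ = 1 + Ibar x := by rw [hwone, hdw_val]
    have hexp_val : ∫ y, Real.exp (φ y) ∂ν ≤ 1 + Ibar x := by
      rw [← hgν_val]
      exact integral_mono hexpν hgν hexp_le
    have hchain : -p * u x ≤ p * C₂ + ∫ y, φ y ∂ν := by
      rw [hφval]
      have h6 : |C₀| * (∫ y, |f y| ∂μ) ≤ |C₀| * (2*K) :=
        mul_le_mul_of_nonneg_left hfabs (abs_nonneg _)
      have h5 : -(u x) ≤ C₂ + rplus * ∫ y, L x y * w y ∂μ := by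
        rw [hC₂_def]
        calc -(u x) ≤ |C₀| * (∫ y, |f y| ∂μ) + ∫ y, L x y * m y ∂μ := hstep1
          _ ≤ |C₀| * (2*K) + (K * (M/Real.pi) + rplus * ∫ y, L x y * w y ∂μ) :=
              add_le_add h6 hstep2
          _ = 2 * |C₀| * K + K * (M/Real.pi) + rplus * ∫ y, L x y * w y ∂μ := by ring
      have h7 : p * (-(u x)) ≤ p * (C₂ + rplus * ∫ y, L x y * w y ∂μ) :=
        mul_le_mul_of_nonneg_left h5 hp0.le
      nlinarith
    calc Real.exp (-p * u x) ≤ Real.exp (p * C₂ + ∫ y, φ y ∂ν) := Real.exp_le_exp.mpr hchain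
      _ = Real.exp (p * C₂) * Real.exp (∫ y, φ y ∂ν) := Real.exp_add _ _
      _ ≤ Real.exp (p * C₂) * ∫ y, Real.exp (φ y) ∂ν :=
          mul_le_mul_of_nonneg_left hjen (Real.exp_pos _).le
      _ ≤ Real.exp (p * C₂) * (1 + Ibar x) :=
          mul_le_mul_of_nonneg_left hexp_val (Real.exp_pos _).le
      _ ≤ 1 + Real.exp (p * C₂) * (1 + Ibar x) := by linarith
  -- conclusion
  have hRHSint : Integrable (fun x => 1 + Real.exp (p * C₂) * (1 + Ibar x)) μ :=
    (integrable_const _).add (((integrable_const _).add hIbarInt).const_mul _)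
  calc ∫ x, Real.exp (-p * u x) ∂μ
      ≤ ∫ x, (1 + Real.exp (p * C₂) * (1 + Ibar x)) ∂μ :=
        integral_mono_ae (cont_integrable μ (Real.continuous_exp.comp (continuous_const.mul hu)))
          hRHSint hmain
    _ = 1 + Real.exp (p * C₂) * (1 + ∫ x, Ibar x ∂μ) := by
        have h2 : Integrable (fun x => Real.exp (p * C₂) * (1 + Ibar x)) μ :=
          ((integrable_const _).add hIbarInt).const_mul _
        rw [integral_add (integrable_const (1:ℝ)) h2, integral_const_mul,
          integral_add (integrable_const (1:ℝ)) hIbarInt]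
        simp [measure_univ]
    _ ≤ 1 + Real.exp (p * C₂) * (1 + M) := by
        have h1 : (1:ℝ) + ∫ x, Ibar x ∂μ ≤ 1 + M := by linarith
        nlinarith [Real.exp_pos (p * C₂)]
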